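/- If a sequence (x_n) converges to L with x_n ≠ L for all n and the errors satisfy (x_{n+1} - L)/(x_n - L) → c for some constant c with |c| < 1 and c ≠ 0 (linear convergence), then for sufficiently large n the denominator x_{n+2} - 2x_{n+1} + x_n is eventually nonzero, and the Aitken sequence y_n = x_n - (x_{n+1} - x_n)²/(x_{n+2} - 2x_{n+1} + x_n) satisfies (y_n - L)/(x_n - L) → 0. -/
import Mathlib


open Filter Topology

theorem aitken_acceleration (x : ℕ → ℝ) (L c : ℝ)
    (hx : Filter.Tendsto x Filter.atTop (nhds L))
    (hne : ∀ n, x n ≠ L)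
    (hc : Filter.Tendsto (fun n => (x (n + 1) - L) / (x n - L)) Filter.atTop (nhds c))
    (hc1 : |c| < 1) (hc0 : c ≠ 0) :
    (∀ᶠ n in Filter.atTop, x (n + 2) - 2 * x (n + 1) + x n ≠ 0) ∧
      Filter.Tendsto
        (fun n =>
          ((x n - (x (n + 1) - x n) ^ 2 / (x (n + 2) - 2 * x (n + 1) + x n)) - L) /
            (x n - L))
        Filter.atTop (nhds 0) := by
  have he : ∀ n, x n - L ≠ 0 := fun n => sub_ne_zero.mpr (hne n)
  set r : ℕ → ℝ := fun n => (x (n + 1) - L) / (x n - L) with hr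
  have hrx : ∀ n, x (n + 1) - L = r n * (x n - L) := by
    intro n
    rw [hr]
    exact (div_mul_cancel₀ _ (he n)).symm
  have hc' : c ≠ 1 := by
    intro h; rw [h] at hc1; simp at hc1
  have hgne : (c - 1) ^ 2 ≠ 0 := pow_ne_zero _ (sub_ne_zero.mpr hc')
  have h1 : Tendsto (fun n => r (n + 1)) atTop (nhds c) :=
    hc.comp (tendsto_add_atTop_nat 1)
  have hg : Tendsto (fun n => r (n + 1) * r n - 2 * r n + 1) atTop (nhds ((c - 1) ^ 2)) := by
    have : Tendsto (fun n => r (n + 1) * r n - 2 * r n + 1) atTop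
        (nhds (c * c - 2 * c + 1)) :=
      ((h1.mul hc).sub (tendsto_const_nhds.mul hc)).add tendsto_const_nhds
    convert this using 2
    ring
  have hgev : ∀ᶠ n in atTop, r (n + 1) * r n - 2 * r n + 1 ≠ 0 := hg.eventually_ne hgne
  have hd : ∀ n, x (n + 2) - 2 * x (n + 1) + x n
      = (x n - L) * (r (n + 1) * r n - 2 * r n + 1) := by
    intro n
    have h2 : x (n + 2) - L = r (n + 1) * (r n * (x n - L)) := by
      rw [← hrx n]; exact hrx (n + 1)
    nlinarith [h2, hrx n]
  constructor
  · filter_upwards [hgev] with n hn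
    rw [hd n]
    exact mul_ne_zero (he n) hn
  · have hlim : Tendsto
        (fun n => 1 - (r n - 1) ^ 2 / (r (n + 1) * r n - 2 * r n + 1)) atTop (nhds 0) := by
      have hq : Tendsto (fun n => (r n - 1) ^ 2 / (r (n + 1) * r n - 2 * r n + 1)) atTop
          (nhds ((c - 1) ^ 2 / (c - 1) ^ 2)) :=
        Tendsto.div ((hc.sub tendsto_const_nhds).pow 2) hg hgne
      rw [div_self hgne] at hq
      have := (tendsto_const_nhds (α := ℕ) (f := atTop) (x := (1 : ℝ))).sub hq
      simpa using this
    refine Tendsto.congr' ?_ hlim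
    filter_upwards [hgev] with n hn
    have ha := he n
    have hΔ : x (n + 1) - x n = (r n - 1) * (x n - L) := by
      have := hrx n; nlinarith [this]
    rw [hd n, hΔ]
    field_simp
    ring
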